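/- Let N be an abelian group. Suppose that for every integer n ≥ 1 there are endomorphisms F_n, V_n : N → N such that: (i) F_n(V_n(x)) = n•x for all x ∈ N; and (ii) for every element x ∈ N of finite order there exists r(x) ∈ ℕ such that F_n(x) = 0 for all n ≥ r(x). Then for every finite subgroup H of N there is an injective group homomorphism from ⨁_ℕ H into N; moreover, if H is a direct summand of N, then there is a subgroup of N isomorphic to ⨁_ℕ H which is a direct summand of N. -/

import Mathlib

open Function

universe u

namespace ANil

/-- multiplication by `p` as an additive homomorphism -/
def smulHom (p : ℕ) (N : Type u) [AddCommGroup N] : N →+ N :=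
  AddMonoidHom.mk' (fun x => p • x) (fun a b => smul_add p a b)

@[simp] lemma smulHom_apply (p : ℕ) {N : Type u} [AddCommGroup N] (x : N) :
    smulHom p N x = p • x := rfl


lemma zmod_retract (p : ℕ) [Fact p.Prime] (G : Type u) [AddCommGroup G] [Module (ZMod p) G]
    (W : AddSubgroup G) : ∃ r : G →+ G, (∀ x, r x ∈ W) ∧ ∀ w ∈ W, r w = w := by
  let Wsub : Submodule (ZMod p) G := AddSubgroup.toZModSubmodule p W
  obtain ⟨C, hC⟩ := Submodule.exists_isCompl Wsub
  let proj : G →ₗ[ZMod p] ↥Wsub := Submodule.projectionOnto _ _ hC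
  refine ⟨(Wsub.subtype.comp proj).toAddMonoidHom, fun x => ?_, fun w hw => ?_⟩
  · exact (proj x).2
  · show Wsub.subtype (proj w) = w
    have hw' : w ∈ Wsub := hw
    have h := Submodule.linearProjOfIsCompl_apply_left hC (⟨w, hw'⟩ : ↥Wsub)
    rw [show ((⟨w, hw'⟩ : ↥Wsub) : G) = w from rfl] at h
    rw [h]
    rfl

/-- A pure subgroup of a group of bounded exponent is a direct summand. -/
theorem PB : ∀ (e : ℕ), 0 < e →
    ∀ (N : Type u) [AddCommGroup N], ∀ (K : AddSubgroup N),
      (∀ x : N, e • x = 0) →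
      (∀ (m : ℕ) (y : N), m • y ∈ K → ∃ k ∈ K, m • y = m • k) →
      ∃ σ : N →+ N, (∀ x, σ x ∈ K) ∧ ∀ a ∈ K, σ a = a := by
  intro e
  induction e using Nat.strong_induction_on with
  | _ e IH =>
  intro he N _ K hN hpure
  rcases eq_or_lt_of_le (show 1 ≤ e from he) with h1 | h2
  · -- e = 1, group is trivial
    have hx0 : ∀ x : N, x = 0 := by
      intro x
      have := hN x
      rwa [← h1, one_nsmul] at this
    exact ⟨0, fun x => by simp [K.zero_mem], fun a _ => by simp [hx0 a]⟩
  -- e ≥ 2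
  set p := e.minFac with hp
  have hpprime : p.Prime := Nat.minFac_prime (by omega)
  set f := e / p with hf
  have hpf : p * f = e := Nat.mul_div_cancel' e.minFac_dvd
  have hfpos : 0 < f := by
    rcases Nat.eq_zero_or_pos f with h | h
    · rw [h, Nat.mul_zero] at hpf; omega
    · exact h
  have hflt : f < e := by
    have := hpprime.two_le
    nlinarith
  -- the subgroup pN
  let P : AddSubgroup N := (smulHom p N).range
  have hPmem : ∀ x : N, p • x ∈ P := fun x => ⟨x, rfl⟩
  let K' : AddSubgroup ↥P := K.comap P.subtype
  have hPbound : ∀ x : ↥P, f • x = 0 := by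
    rintro ⟨_, z, rfl⟩
    apply Subtype.ext
    show f • (smulHom p N z) = 0
    rw [smulHom_apply, smul_smul, mul_comm f p, hpf, hN]
  have hpure' : ∀ (m : ℕ) (y : ↥P), m • y ∈ K' → ∃ k ∈ K', m • y = m • k := by
    rintro m ⟨_, z, rfl⟩ hm
    have h1 : (m * p) • z ∈ K := by
      have h0 : m • (smulHom p N z) ∈ K := hm
      rwa [smulHom_apply, smul_smul] at h0
    obtain ⟨k, hk, hkeq⟩ := hpure (m * p) z h1
    refine ⟨⟨p • k, hPmem k⟩, ?_, ?_⟩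
    · show p • k ∈ K
      exact AddSubgroup.nsmul_mem K hk p
    · apply Subtype.ext
      show m • (smulHom p N z) = m • (p • k)
      rw [smulHom_apply, smul_smul, smul_smul, hkeq]
  obtain ⟨σP, hσP1, hσP2⟩ := IH f hflt hfpos ↥P K' hPbound hpure'
  -- τ : N → N, x ↦ (retraction of pN onto pK applied to p•x)
  let φP : N →+ ↥P := (smulHom p N).codRestrict P hPmem
  let τ : N →+ N := P.subtype.comp (σP.comp φP)
  have hτK : ∀ x, τ x ∈ K := fun x => hσP1 (φP x)
  have hτP : ∀ x, τ x ∈ P := fun x => (σP (φP x)).2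
  have hτk : ∀ k ∈ K, τ k = p • k := by
    intro k hk
    have hmem : φP k ∈ K' := by
      show ((φP k : ↥P) : N) ∈ K
      show p • k ∈ K
      exact AddSubgroup.nsmul_mem K hk p
    show (σP (φP k) : N) = p • k
    rw [hσP2 _ hmem]
    rfl
  -- the auxiliary extension group E ⊆ N × K
  let ηE : (N × ↥K) →+ N :=
    (τ.comp (AddMonoidHom.fst N ↥K)) -
      ((smulHom p N).comp (K.subtype.comp (AddMonoidHom.snd N ↥K)))
  let E : AddSubgroup (N × ↥K) := ηE.ker
  have hEmem : ∀ z : N × ↥K, z ∈ E ↔ τ z.1 = p • (z.2 : N) := by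
    intro z
    show ηE z = 0 ↔ _
    have h0 : ηE z = τ z.1 - p • (z.2 : N) := rfl
    rw [h0, sub_eq_zero]
  let π₁ : ↥E →+ N := (AddMonoidHom.fst N ↥K).comp E.subtype
  let π₂ : ↥E →+ N := K.subtype.comp ((AddMonoidHom.snd N ↥K).comp E.subtype)
  have hπ₂K : ∀ z : ↥E, π₂ z ∈ K := fun z => (z.1.2).2
  have hEcond : ∀ z : ↥E, τ (π₁ z) = p • (π₂ z) := fun z => (hEmem z.1).mp z.2
  have hπ₁surj : Surjective π₁ := by
    intro x
    obtain ⟨z, hz⟩ := hτP x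
    have hz' : p • z = τ x := hz
    obtain ⟨k, hk, hkeq⟩ := hpure p z (by rw [hz']; exact hτK x)
    refine ⟨⟨(x, ⟨k, hk⟩), ?_⟩, rfl⟩
    rw [hEmem]
    show τ x = p • k
    rw [← hz']
    exact hkeq
  have hker₂ : ∀ w : ↥E, π₁ w = 0 → p • π₂ w = 0 := by
    intro w hw
    have h := hEcond w
    rw [hw, map_zero] at h
    exact h.symm
  haveI hfact : Fact p.Prime := ⟨hpprime⟩
  -- quotient of E modulo p, a vector space over ZMod p
  let PE : AddSubgroup ↥E := (smulHom p ↥E).range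
  letI : Module (ZMod p) (↥E ⧸ PE) := QuotientAddGroup.zmodModule (fun x => ⟨x, rfl⟩)
  let mkE : ↥E →+ ↥E ⧸ PE := QuotientAddGroup.mk' PE
  let Wb : AddSubgroup (↥E ⧸ PE) := (π₁.ker).map mkE
  obtain ⟨rE, hrE1, hrE2⟩ := zmod_retract p (↥E ⧸ PE) Wb
  let ν : ↥(π₁.ker) →+ ↥Wb :=
    (mkE.comp (π₁.ker).subtype).codRestrict Wb
      (fun w => AddSubgroup.mem_map_of_mem mkE w.2)
  have hνinj : Injective ν := by
    rw [injective_iff_map_eq_zero]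
    intro w hw0
    have hPEmem : (w : ↥E) ∈ PE := by
      have h0 : mkE (w : ↥E) = 0 := congrArg Subtype.val hw0
      rwa [QuotientAddGroup.mk'_apply, QuotientAddGroup.eq_zero_iff] at h0
    obtain ⟨z, hz⟩ := hPEmem
    have hz' : p • z = (w : ↥E) := hz
    have hz1 : p • (π₁ z) = 0 := by
      have h3 : π₁ (p • z) = π₁ (w : ↥E) := congrArg π₁ hz'
      rw [map_nsmul] at h3
      rw [h3]
      exact w.2
    have hτz : τ (π₁ z) = 0 := by
      have hφ : φP (π₁ z) = 0 := by
        apply Subtype.ext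
        exact hz1
      show P.subtype (σP (φP (π₁ z))) = 0
      rw [hφ, map_zero, map_zero]
    have hz2 : p • π₂ z = 0 := by
      have h4 := hEcond z
      rw [hτz] at h4
      exact h4.symm
    have hpz : (p • z : ↥E) = 0 := by
      apply Subtype.ext
      have hc1 : ((p • z : ↥E) : N × ↥K).1 = 0 := hz1
      have hc2 : ((p • z : ↥E) : N × ↥K).2 = 0 := Subtype.ext hz2
      exact Prod.ext hc1 hc2
    apply Subtype.ext
    rw [← hz']
    exact hpz
  have hνsurj : Surjective ν := by
    rintro ⟨_, w, hw, rfl⟩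
    exact ⟨⟨w, hw⟩, Subtype.ext rfl⟩
  let ψ : ↥(π₁.ker) ≃+ ↥Wb := AddEquiv.ofBijective ν ⟨hνinj, hνsurj⟩
  let r₀ : ↥E →+ ↥(π₁.ker) :=
    ψ.symm.toAddMonoidHom.comp ((rE.comp mkE).codRestrict Wb (fun z => hrE1 _))
  have hr₀ : ∀ w : ↥(π₁.ker), r₀ ((π₁.ker).subtype w) = w := by
    intro w
    have hmem : mkE (w : ↥E) ∈ Wb := AddSubgroup.mem_map_of_mem mkE w.2
    have h5 : ((rE.comp mkE).codRestrict Wb (fun z => hrE1 _)) ((π₁.ker).subtype w) = ν w := by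
      apply Subtype.ext
      show rE (mkE ((π₁.ker).subtype w)) = mkE (w : ↥E)
      exact hrE2 _ hmem
    show ψ.symm (((rE.comp mkE).codRestrict Wb (fun z => hrE1 _)) ((π₁.ker).subtype w)) = w
    rw [h5]
    exact ψ.symm_apply_apply w
  -- the splitting s of π₁, and σ₀
  let dE : ↥E →+ ↥E := (AddMonoidHom.id ↥E) - ((π₁.ker).subtype.comp r₀)
  have hdker : ∀ z ∈ π₁.ker, dE z = 0 := by
    intro z hz
    show z - (π₁.ker).subtype (r₀ z) = 0
    have h6 : r₀ z = r₀ ((π₁.ker).subtype ⟨z, hz⟩) := rfl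
    rw [h6, hr₀]
    exact sub_self z
  let e₁ : (↥E ⧸ π₁.ker) →+ N := QuotientAddGroup.lift π₁.ker π₁ (le_refl _)
  have he₁inj : Injective e₁ := by
    rw [injective_iff_map_eq_zero]
    intro c
    induction c using QuotientAddGroup.induction_on with
    | H z =>
      intro hc
      have hz : π₁ z = 0 := hc
      exact (QuotientAddGroup.eq_zero_iff z).mpr hz
  have he₁surj : Surjective e₁ := by
    intro x
    obtain ⟨z, hz⟩ := hπ₁surj x
    exact ⟨QuotientAddGroup.mk z, hz⟩
  let χ : (↥E ⧸ π₁.ker) ≃+ N := AddEquiv.ofBijective e₁ ⟨he₁inj, he₁surj⟩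
  let D : (↥E ⧸ π₁.ker) →+ ↥E :=
    QuotientAddGroup.lift π₁.ker dE (fun z hz => AddMonoidHom.mem_ker.mpr (hdker z hz))
  let s : N →+ ↥E := D.comp χ.symm.toAddMonoidHom
  have hs : ∀ z : ↥E, s (π₁ z) = dE z := by
    intro z
    have h6 : χ.symm (π₁ z) = QuotientAddGroup.mk z := by
      apply χ.injective
      rw [AddEquiv.apply_symm_apply]
      rfl
    show D (χ.symm (π₁ z)) = dE z
    rw [h6]
    rfl
  let σ₀ : N →+ N := π₂.comp s
  have hσ₀K : ∀ x, σ₀ x ∈ K := fun x => hπ₂K (s x)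
  have hσ₀p : ∀ x : N, p • σ₀ x = τ x := by
    intro x
    obtain ⟨z, hz⟩ := hπ₁surj x
    rw [← hz]
    show p • π₂ (s (π₁ z)) = τ (π₁ z)
    rw [hs]
    have h7 : π₂ (dE z) = π₂ z - π₂ ((π₁.ker).subtype (r₀ z)) := by
      show π₂ (z - (π₁.ker).subtype (r₀ z)) = _
      rw [map_sub]
    have h8 : p • π₂ ((π₁.ker).subtype (r₀ z)) = 0 := hker₂ _ ((r₀ z).2)
    rw [h7, smul_sub, h8, sub_zero, hEcond z]
  -- correction on the p-torsion part
  let pN : AddSubgroup N := (smulHom p N).range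
  letI : Module (ZMod p) (N ⧸ pN) := QuotientAddGroup.zmodModule (fun x => ⟨x, rfl⟩)
  let mk₁ : N →+ N ⧸ pN := QuotientAddGroup.mk' pN
  let q : ↥K →+ N ⧸ pN := mk₁.comp K.subtype
  let Δ : ↥K →+ N := σ₀.comp K.subtype - K.subtype
  have hΔval : ∀ k : ↥K, Δ k = σ₀ (k : N) - (k : N) := fun k => rfl
  have hΔK : ∀ k : ↥K, Δ k ∈ K := fun k => K.sub_mem (hσ₀K _) k.2
  have hΔp : ∀ k : ↥K, p • Δ k = 0 := by
    intro k
    rw [hΔval, smul_sub, hσ₀p, hτk _ k.2, sub_self]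
  have hΔker : q.ker ≤ Δ.ker := by
    intro z hz
    have hz0 : mk₁ (z : N) = 0 := hz
    have hz' : (z : N) ∈ pN := by
      rwa [QuotientAddGroup.mk'_apply, QuotientAddGroup.eq_zero_iff] at hz0
    obtain ⟨y, hy⟩ := hz'
    have hy' : p • y = (z : N) := hy
    obtain ⟨k₁, hk₁, hk₁eq⟩ := hpure p y (by rw [hy']; exact z.2)
    have hzk : z = p • (⟨k₁, hk₁⟩ : ↥K) := by
      apply Subtype.ext
      show (z : N) = p • k₁
      rw [← hy', hk₁eq]
    rw [AddMonoidHom.mem_ker, hzk, map_nsmul, hΔp]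
  let D₂ : (↥K ⧸ q.ker) →+ N := QuotientAddGroup.lift q.ker Δ hΔker
  let e₂ : (↥K ⧸ q.ker) →+ ↥(q.range) :=
    QuotientAddGroup.lift q.ker q.rangeRestrict
      (fun z hz => by apply Subtype.ext; exact hz)
  have he₂inj : Injective e₂ := by
    rw [injective_iff_map_eq_zero]
    intro c
    induction c using QuotientAddGroup.induction_on with
    | H z =>
      intro hc
      have hz : q z = 0 := congrArg Subtype.val hc
      exact (QuotientAddGroup.eq_zero_iff z).mpr hz
  have he₂surj : Surjective e₂ := by
    rintro ⟨_, z, rfl⟩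
    exact ⟨QuotientAddGroup.mk z, rfl⟩
  let χ₂ : (↥K ⧸ q.ker) ≃+ ↥(q.range) := AddEquiv.ofBijective e₂ ⟨he₂inj, he₂surj⟩
  let θ : ↥(q.range) →+ N := D₂.comp χ₂.symm.toAddMonoidHom
  have hθK : ∀ y : ↥(q.range), θ y ∈ K := by
    intro y
    obtain ⟨c, hc⟩ := QuotientAddGroup.mk'_surjective q.ker (χ₂.symm y)
    show D₂ (χ₂.symm y) ∈ K
    rw [← hc]
    exact hΔK c
  obtain ⟨rQ, hrQ1, hrQ2⟩ := zmod_retract p (N ⧸ pN) q.range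
  let δ' : N →+ N := θ.comp ((rQ.comp mk₁).codRestrict q.range (fun x => hrQ1 _))
  have hδ'K : ∀ x, δ' x ∈ K := fun x => hθK _
  have hδ'k : ∀ k, k ∈ K → δ' k = σ₀ k - k := by
    intro k hk
    have hmem : mk₁ k ∈ q.range := ⟨⟨k, hk⟩, rfl⟩
    have h9 : ((rQ.comp mk₁).codRestrict q.range (fun x => hrQ1 _)) k = ⟨mk₁ k, hmem⟩ := by
      apply Subtype.ext
      show rQ (mk₁ k) = mk₁ k
      exact hrQ2 _ hmem
    show θ (((rQ.comp mk₁).codRestrict q.range (fun x => hrQ1 _)) k) = σ₀ k - k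
    rw [h9]
    have h10 : χ₂.symm ⟨mk₁ k, hmem⟩ = QuotientAddGroup.mk (⟨k, hk⟩ : ↥K) := by
      apply χ₂.injective
      rw [AddEquiv.apply_symm_apply]
      apply Subtype.ext
      rfl
    show D₂ (χ₂.symm ⟨mk₁ k, hmem⟩) = σ₀ k - k
    rw [h10]
    rfl
  refine ⟨σ₀ - δ', fun x => ?_, fun a ha => ?_⟩
  · show σ₀ x - δ' x ∈ K
    exact K.sub_mem (hσ₀K x) (hδ'K x)
  · show σ₀ a - δ' a = a
    rw [hδ'k a ha]
    abel

/-- **Prüfer's theorem**: a pure subgroup of bounded exponent is a direct summand. -/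
theorem pure_bounded_splits (N : Type u) [AddCommGroup N] (K : AddSubgroup N) (e : ℕ)
    (he : 0 < e) (hKb : ∀ k ∈ K, e • k = 0)
    (hpure : ∀ (m : ℕ) (y : N), m • y ∈ K → ∃ k ∈ K, m • y = m • k) :
    ∃ σ : N →+ N, (∀ x, σ x ∈ K) ∧ ∀ a ∈ K, σ a = a := by
  let eN : AddSubgroup N := (smulHom e N).range
  let mkQ : N →+ N ⧸ eN := QuotientAddGroup.mk' eN
  have hmkQ : ∀ x : N, mkQ x = 0 ↔ x ∈ eN := fun x => QuotientAddGroup.eq_zero_iff x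
  have hQb : ∀ x : N ⧸ eN, e • x = 0 := by
    intro x
    obtain ⟨y, rfl⟩ := QuotientAddGroup.mk'_surjective eN x
    rw [← map_nsmul]
    exact (hmkQ _).mpr ⟨y, rfl⟩
  let Kb : AddSubgroup (N ⧸ eN) := K.map mkQ
  have hpureQ : ∀ (m : ℕ) (yb : N ⧸ eN), m • yb ∈ Kb → ∃ kb ∈ Kb, m • yb = m • kb := by
    intro m yb hm
    obtain ⟨y, rfl⟩ := QuotientAddGroup.mk'_surjective eN yb
    obtain ⟨k, hk, hkeq⟩ := hm
    -- hkeq : mkQ k = m • mkQ y, so k - m • y ∈ eN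
    have hmem : k - m • y ∈ eN := by
      rw [← hmkQ]
      rw [map_sub, map_nsmul, hkeq, sub_self]
    obtain ⟨w, hw⟩ := hmem
    have hw' : e • w = k - m • y := hw
    -- k = m • y + e • w is divisible by d = gcd m e in N
    set d := Nat.gcd m e with hd
    obtain ⟨m', hm'⟩ : d ∣ m := Nat.gcd_dvd_left m e
    obtain ⟨e', he'⟩ : d ∣ e := Nat.gcd_dvd_right m e
    have hkd : k = d • (m' • y + e' • w) := by
      have : k = m • y + e • w := by rw [hw']; abel
      rw [this, smul_add, smul_smul, smul_smul, ← hm', ← he']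
    obtain ⟨k₁, hk₁, hk₁eq⟩ := hpure d (m' • y + e' • w) (by rw [← hkd]; exact hk)
    have hkd1 : k = d • k₁ := by rw [hkd, hk₁eq]
    -- Bezout: d = m * a + e * b over ℤ
    have hbez : (d : ℤ) = m * Nat.gcdA m e + e * Nat.gcdB m e := Nat.gcd_eq_gcd_ab m e
    have hk2 : k = m • (Nat.gcdA m e • k₁) := by
      have h1 : k = (d : ℤ) • k₁ := by rw [hkd1, natCast_zsmul]
      rw [h1, hbez, add_smul, mul_smul, mul_comm (e : ℤ), mul_smul]
      have h2 : (e : ℤ) • k₁ = 0 := by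
        rw [natCast_zsmul]
        exact hKb k₁ hk₁
      rw [h2, smul_zero, add_zero, natCast_zsmul]
    refine ⟨mkQ (Nat.gcdA m e • k₁), AddSubgroup.mem_map_of_mem mkQ (K.zsmul_mem hk₁ _), ?_⟩
    calc m • mkQ y = mkQ k := hkeq.symm
      _ = mkQ (m • (Nat.gcdA m e • k₁)) := by rw [← hk2]
      _ = m • mkQ (Nat.gcdA m e • k₁) := by rw [map_nsmul]
  obtain ⟨σb, hσb1, hσb2⟩ := PB e he (N ⧸ eN) Kb hQb hpureQ
  -- transfer the retraction back to N
  let ν : ↥K →+ ↥Kb := (mkQ.comp K.subtype).codRestrict Kb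
    (fun k => AddSubgroup.mem_map_of_mem mkQ k.2)
  have hνinj : Injective ν := by
    rw [injective_iff_map_eq_zero]
    intro k hk0
    have h0 : mkQ (k : N) = 0 := congrArg Subtype.val hk0
    have h1 : (k : N) ∈ eN := (hmkQ _).mp h0
    obtain ⟨w, hw⟩ := h1
    have hw' : e • w = (k : N) := hw
    obtain ⟨k₁, hk₁, hk₁eq⟩ := hpure e w (by rw [hw']; exact k.2)
    apply Subtype.ext
    rw [← hw', hk₁eq, hKb k₁ hk₁]
    rfl
  have hνsurj : Surjective ν := by
    rintro ⟨_, k, hk, rfl⟩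
    exact ⟨⟨k, hk⟩, Subtype.ext rfl⟩
  let A : ↥K ≃+ ↥Kb := AddEquiv.ofBijective ν ⟨hνinj, hνsurj⟩
  let step1 : N →+ ↥Kb := (σb.comp mkQ).codRestrict Kb (fun x => hσb1 _)
  let σ : N →+ N := K.subtype.comp (A.symm.toAddMonoidHom.comp step1)
  refine ⟨σ, fun x => (A.symm (step1 x)).2, fun a ha => ?_⟩
  have hmem : mkQ a ∈ Kb := AddSubgroup.mem_map_of_mem mkQ ha
  have h1 : step1 a = ν ⟨a, ha⟩ := by
    apply Subtype.ext
    show σb (mkQ a) = mkQ a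
    exact hσb2 _ hmem
  show K.subtype (A.symm (step1 a)) = a
  rw [h1]
  have h2 : A.symm (ν ⟨a, ha⟩) = ⟨a, ha⟩ := A.symm_apply_apply ⟨a, ha⟩
  rw [h2]
  rfl

noncomputable def gsU {N : Type u} [AddCommGroup N] (H : AddSubgroup N) (Vs : ℕ → (↥H →+ N)) (g : ℕ → (N →+ ↥H)) :
    ℕ → (↥H →+ N)
  | i => Vs i - ∑ j : Fin i, (gsU H Vs g j).comp ((g j).comp (Vs i))
  decreasing_by exact j.2

lemma gsU_ortho {N : Type u} [AddCommGroup N] (H : AddSubgroup N) (Vs : ℕ → (↥H →+ N)) (g : ℕ → (N →+ ↥H))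
    (hKV : ∀ i j : ℕ, i < j → ∀ h : ↥H, g j (Vs i h) = 0)
    (hDiag : ∀ i : ℕ, ∀ h : ↥H, g i (Vs i h) = h) :
    ∀ i j (h : ↥H), g j (gsU H Vs g i h) = if j = i then h else 0 := by
  intro i
  induction i using Nat.strong_induction_on with
  | _ i IH =>
  intro j h
  rw [gsU]
  simp only [AddMonoidHom.sub_apply, AddMonoidHom.finset_sum_apply, AddMonoidHom.coe_comp,
    comp_apply, map_sub, map_sum]
  have hsum : ∀ l : Fin i, g j (gsU H Vs g l (g l (Vs i h)))
      = if j = (l : ℕ) then g (l : ℕ) (Vs i h) else 0 := by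
    intro l
    rw [IH l l.2]
  rw [Finset.sum_congr rfl (fun l _ => hsum l)]
  rw [Fin.sum_univ_eq_sum_range (fun l => if j = l then g l (Vs i h) else 0) i]
  rw [Finset.sum_ite_eq (Finset.range i) j (fun l => g l (Vs i h))]
  rcases lt_trichotomy j i with hlt | heq | hgt
  · simp [Finset.mem_range.mpr hlt, if_neg (Nat.ne_of_lt hlt)]
  · subst heq
    simp [hDiag j h, Finset.mem_range]
  · simp [if_neg (Nat.ne_of_gt hgt), hKV i j hgt h,
      Finset.mem_range, Nat.not_lt.mpr (le_of_lt hgt)]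



end ANil

open ANil Function


/-- **Proposition 6.1 (abstract form, Waldhausen A-theory Nil-terms).** If an abelian group
`N` carries, for every `n ≥ 1`, endomorphisms `F n, V n` with `Fₙ(Vₙ x) = n • x` for all `x`,
and for every element `x` of finite order there is `r(x)` with `Fₙ x = 0` for all `n ≥ r(x)`,
then every finite subgroup `H ≤ N` gives an embedding of `⨁_ℕ H` into `N`; moreover if `H` is
a direct summand of `N`, then some subgroup of `N` isomorphic to `⨁_ℕ H` is a direct summand. -/
theorem a_theory_nil_infinite_sum
    (N : Type*) [AddCommGroup N]
    (F V : ℕ → N →+ N)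
    (h1 : ∀ n : ℕ, 1 ≤ n → ∀ x : N, F n (V n x) = n • x)
    (h2 : ∀ x : N, IsOfFinAddOrder x → ∃ r : ℕ, ∀ n : ℕ, r ≤ n → F n x = 0) :
    ∀ H : AddSubgroup N, Finite H →
      (∃ f : (ℕ →₀ H) →+ N, Function.Injective f) ∧
      ((∃ ρ : N →+ N, (∀ x : N, ρ x ∈ H) ∧ ∀ h ∈ H, ρ h = h) →
        ∃ K : AddSubgroup N, Nonempty (K ≃+ (ℕ →₀ H)) ∧
          ∃ σ : N →+ N, (∀ x : N, σ x ∈ K) ∧ ∀ a ∈ K, σ a = a) := by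
  intro H hHfin
  classical
  haveI : Finite ↥H := hHfin
  set e := Nat.card ↥H with he
  have hepos : 0 < e := Nat.card_pos
  have heH : ∀ h : ↥H, e • h = 0 := fun h => card_nsmul_eq_zero'
  have heHN : ∀ x : N, x ∈ H → e • x = 0 := by
    intro x hx
    have h0 : ((e • (⟨x, hx⟩ : ↥H) : ↥H) : N) = e • x := rfl
    rw [← h0, heH]
    rfl
  -- a uniform vanishing bound for the torsion elements V m h, h ∈ H
  have hRex : ∀ m : ℕ, ∃ R : ℕ, ∀ h : ↥H, ∀ k, R ≤ k → F k (V m (h : N)) = 0 := by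
    intro m
    haveI := Fintype.ofFinite ↥H
    have htors : ∀ h : ↥H, IsOfFinAddOrder (V m (h : N)) := by
      intro h
      rw [isOfFinAddOrder_iff_nsmul_eq_zero]
      exact ⟨e, hepos, by rw [← map_nsmul, heHN _ h.2, map_zero]⟩
    choose r hr using fun h : ↥H => h2 (V m (h : N)) (htors h)
    refine ⟨Finset.univ.sup r, fun h k hk => hr h k ?_⟩
    exact le_trans (Finset.le_sup (Finset.mem_univ h)) hk
  choose R hR using hRex
  -- the rapidly increasing sequence n i ≡ 1 mod e
  let nth : ℕ → ℕ := fun i => Nat.rec (e + 1) (fun _ prev => e * (prev + R prev + 1) + 1) i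
  have nth0 : nth 0 = e + 1 := rfl
  have nthS : ∀ i, nth (i + 1) = e * (nth i + R (nth i) + 1) + 1 := fun i => rfl
  have hmod : ∀ i, ∃ m, nth i = e * m + 1 := by
    intro i
    cases i with
    | zero => exact ⟨1, by rw [nth0, mul_one]⟩
    | succ i => exact ⟨_, nthS i⟩
  have h1le : ∀ i, 1 ≤ nth i := by
    intro i
    obtain ⟨m, hm⟩ := hmod i
    omega
  have hlt : ∀ i, nth i < nth (i + 1) := by
    intro i
    rw [nthS]
    have h0 : nth i + R (nth i) + 1 ≤ e * (nth i + R (nth i) + 1) :=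
      Nat.le_mul_of_pos_left _ hepos
    omega
  have hmono : StrictMono nth := strictMono_nat_of_lt_succ hlt
  have hRle : ∀ i j, i < j → R (nth i) ≤ nth j := by
    intro i j hij
    have h0 : R (nth i) ≤ nth (i + 1) := by
      rw [nthS]
      have h3 : nth i + R (nth i) + 1 ≤ e * (nth i + R (nth i) + 1) :=
        Nat.le_mul_of_pos_left _ hepos
      omega
    exact le_trans h0 (hmono.monotone hij)
  have hKVN : ∀ i j, i < j → ∀ x : N, x ∈ H → F (nth j) (V (nth i) x) = 0 := by
    intro i j hij x hx
    exact hR (nth i) ⟨x, hx⟩ (nth j) (hRle i j hij)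
  have hDiagN : ∀ i, ∀ x : N, x ∈ H → F (nth i) (V (nth i) x) = x := by
    intro i x hx
    rw [h1 (nth i) (h1le i)]
    obtain ⟨m, hm⟩ := hmod i
    have h0 : (e * m) • x = 0 := by
      rw [mul_comm e m, mul_smul, heHN x hx, smul_zero]
    rw [hm, add_nsmul, one_nsmul, h0, zero_add]
  constructor
  · -- Part 1 : the embedding of ⨁_ℕ H
    let fp : (ℕ →₀ ↥H) →+ N := Finsupp.liftAddHom (fun i => (V (nth i)).comp H.subtype)
    refine ⟨fp, ?_⟩
    rw [injective_iff_map_eq_zero]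
    intro c hc
    by_contra hc0
    have hne : c.support.Nonempty := Finsupp.support_nonempty_iff.mpr hc0
    set j := c.support.max' hne with hj
    have hcj : c j ≠ 0 := Finsupp.mem_support_iff.mp (c.support.max'_mem hne)
    have hFval : F (nth j) (fp c) = ((c j : ↥H) : N) := by
      rw [Finsupp.liftAddHom_apply]
      rw [map_finsuppSum]
      rw [Finsupp.sum]
      rw [Finset.sum_eq_single j]
      · exact hDiagN j _ (c j).2
      · intro i hi hij
        have hilt : i < j := lt_of_le_of_ne (Finset.le_max' _ _ hi) hij
        exact hKVN i j hilt _ (c i).2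
      · intro hj'
        exact absurd (c.support.max'_mem hne) hj'
    rw [hc, map_zero] at hFval
    exact hcj (Subtype.ext hFval.symm)
  · -- Part 2 : the direct summand
    rintro ⟨ρ, hρ1, hρ2⟩
    let g : ℕ → (N →+ ↥H) := fun j => (ρ.comp (F (nth j))).codRestrict H (fun x => hρ1 _)
    have hg : ∀ j (x : N), ((g j x : ↥H) : N) = ρ (F (nth j) x) := fun j x => rfl
    let Vs : ℕ → (↥H →+ N) := fun i => (V (nth i)).comp H.subtype
    have hKVg : ∀ i j : ℕ, i < j → ∀ h : ↥H, g j (Vs i h) = 0 := by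
      intro i j hij h
      apply Subtype.ext
      rw [hg]
      show ρ (F (nth j) (V (nth i) (h : N))) = ((0 : ↥H) : N)
      rw [hKVN i j hij _ h.2, map_zero]
      rfl
    have hDiagg : ∀ i : ℕ, ∀ h : ↥H, g i (Vs i h) = h := by
      intro i h
      apply Subtype.ext
      rw [hg]
      show ρ (F (nth i) (V (nth i) (h : N))) = (h : N)
      rw [hDiagN i _ h.2]
      exact hρ2 _ h.2
    have hOrtho := ANil.gsU_ortho H Vs g hKVg hDiagg
    set u := ANil.gsU H Vs g with hu
    let fp : (ℕ →₀ ↥H) →+ N := Finsupp.liftAddHom u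
    have hfp : ∀ c : ℕ →₀ ↥H, fp c = ∑ i ∈ c.support, u i (c i) := by
      intro c
      rw [Finsupp.liftAddHom_apply]
      rfl
    have hcoord : ∀ (c : ℕ →₀ ↥H) (j : ℕ), g j (fp c) = c j := by
      intro c j
      rw [hfp, map_sum]
      rw [Finset.sum_congr rfl (fun i _ => hOrtho i j (c i))]
      rw [Finset.sum_ite_eq c.support j (fun i => c i)]
      by_cases hjs : j ∈ c.support
      · rw [if_pos hjs]
      · rw [if_neg hjs, Finsupp.notMem_support_iff.mp hjs]
    have hinj : Injective fp := by
      rw [injective_iff_map_eq_zero]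
      intro c hc
      ext j
      rw [← hcoord c j, hc, map_zero]
      rfl
    -- K := range fp
    have hKmem : ∀ (s : Finset ℕ) (a : ℕ → ↥H), (∑ j ∈ s, u j (a j)) ∈ fp.range := by
      intro s a
      refine ⟨∑ j ∈ s, Finsupp.single j (a j), ?_⟩
      rw [map_sum]
      exact Finset.sum_congr rfl (fun j _ => Finsupp.liftAddHom_apply_single u j (a j))
    have hpure : ∀ (m : ℕ) (y : N), m • y ∈ fp.range → ∃ k ∈ fp.range, m • y = m • k := by
      rintro m y ⟨c, hc⟩
      refine ⟨∑ j ∈ c.support, u j (g j y), hKmem _ _, ?_⟩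
      have hsum : m • ∑ j ∈ c.support, u j (g j y) = ∑ j ∈ c.support, u j (c j) := by
        rw [Finset.smul_sum]
        refine Finset.sum_congr rfl (fun j _ => ?_)
        rw [← map_nsmul (u j), ← map_nsmul (g j), ← hc, hcoord]
      rw [hsum, ← hfp, hc]
    have hbK : ∀ k ∈ fp.range, e • k = 0 := by
      rintro _ ⟨c, rfl⟩
      rw [← map_nsmul]
      have hc0 : e • c = 0 := by
        ext j
        show ((e • c) j : N) = ((0 : ℕ →₀ ↥H) j : N)
        rw [Finsupp.smul_apply, heH]
        rfl
      rw [hc0, map_zero]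
    obtain ⟨σ, hσ1, hσ2⟩ := pure_bounded_splits N fp.range e hepos hbK hpure
    refine ⟨fp.range, ⟨?_⟩, σ, hσ1, hσ2⟩
    -- the isomorphism range fp ≃+ ⨁_ℕ H
    have hbij : Bijective fp.rangeRestrict :=
      ⟨fun a b hab => hinj (congrArg Subtype.val hab), fp.rangeRestrict_surjective⟩
    exact (AddEquiv.ofBijective fp.rangeRestrict hbij).symm
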